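/- arXiv:2011.12807 — 2 statements merged into one kernel-verified Lean document; each statement's English description precedes it below -/
import Mathlib

section
/- For α ∈ [0,1) and θ*(α) = arccos(1-α), the function g_α(θ) = |1-(1-α)cos θ|/((1-α)|sin θ|) attains at θ = θ*(α) the value √(1-(1-α)²)/(1-α) = tan(θ*(α)). Moreover for every θ ∈ (0,π), g_α(θ) ≥ g_α(θ*(α)). -/
open Real

theorem stmt3 (α : ℝ) (hα : α ∈ Set.Ico (0:ℝ) 1) :
    let θs := Real.arccos (1-α)
    (|1 - (1-α)*Real.cos θs| / ((1-α) * |Real.sin θs|)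
        = Real.sqrt (1 - (1-α)^2) / (1-α)) ∧
    (Real.sqrt (1 - (1-α)^2) / (1-α) = Real.tan θs) ∧
    (∀ θ ∈ Set.Ioo (0:ℝ) π,
      |1 - (1-α)*Real.cos θ| / ((1-α) * |Real.sin θ|)
        ≥ Real.sqrt (1 - (1-α)^2) / (1-α)) := by
  intro θs
  obtain ⟨hα0, hα1⟩ := hα
  set c : ℝ := 1 - α with hc
  have hc0 : 0 < c := by simp [hc]; linarith
  have hc1 : c ≤ 1 := by simp [hc]; linarith
  have hcos : Real.cos θs = c := Real.cos_arccos (by linarith) hc1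
  have hsin : Real.sin θs = Real.sqrt (1 - c^2) := by
    rw [show θs = Real.arccos c from rfl, Real.sin_arccos]
  have h1c2 : (0:ℝ) ≤ 1 - c^2 := by nlinarith
  have hs : Real.sqrt (1 - c^2) ^ 2 = 1 - c^2 := Real.sq_sqrt h1c2
  have hsnn : 0 ≤ Real.sqrt (1 - c^2) := Real.sqrt_nonneg _
  refine ⟨?_, ?_, ?_⟩
  · rw [hcos, hsin, abs_of_nonneg hsnn, abs_of_nonneg (by nlinarith)]
    rcases eq_or_lt_of_le hsnn with h | h
    · rw [← h]
      have : 1 - c * c = 0 := by nlinarith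
      simp [this]
    · rw [div_eq_div_iff (by positivity) hc0.ne']
      nlinarith
  · rw [Real.tan_eq_sin_div_cos, hcos, hsin]
  · intro θ hθ
    have hsinθ : 0 < Real.sin θ := Real.sin_pos_of_pos_of_lt_pi hθ.1 hθ.2
    rw [abs_of_pos hsinθ, ge_iff_le, div_le_div_iff₀ hc0 (by positivity)]
    have key : Real.sqrt (1 - c^2) * Real.sin θ ≤ |1 - c * Real.cos θ| := by
      have h1 : Real.sqrt (1 - c^2) * Real.sin θ
          = Real.sqrt ((1 - c^2) * Real.sin θ ^ 2) := by
        rw [Real.sqrt_mul h1c2, Real.sqrt_sq hsinθ.le]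
      have h2 : |1 - c * Real.cos θ| = Real.sqrt ((1 - c * Real.cos θ)^2) := by
        rw [Real.sqrt_sq_eq_abs]
      rw [h1, h2]
      apply Real.sqrt_le_sqrt
      have hpyth : Real.sin θ ^ 2 + Real.cos θ ^ 2 = 1 := Real.sin_sq_add_cos_sq θ
      nlinarith [sq_nonneg (Real.cos θ - c)]
    nlinarith [mul_le_mul_of_nonneg_right key hc0.le]
end

section
/- Let d > 0, x_b = (d,0), n = (cos ψ, sin ψ) with ψ ∈ (0, π/2). If for some θ ∈ (0, π/2) the point z*(θ) = d cos θ (cos θ, sin θ) satisfies (z*(θ) - x_b)·n ≥ 0, then for every φ ∈ [0, θ], (z*(φ) - x_b)·n ≥ 0. -/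
open Real

theorem stmt6 (d ψ θ : ℝ) (hd : 0 < d)
    (hψ : ψ ∈ Set.Ioo (0:ℝ) (π/2)) (hθ : θ ∈ Set.Ioo (0:ℝ) (π/2))
    (hadv : (d*Real.cos θ*Real.cos θ - d) * Real.cos ψ
              + (d*Real.cos θ*Real.sin θ) * Real.sin ψ ≥ 0) :
    ∀ φ ∈ Set.Icc (0:ℝ) θ,
      (d*Real.cos φ*Real.cos φ - d) * Real.cos ψ
        + (d*Real.cos φ*Real.sin φ) * Real.sin ψ ≥ 0 := by
  obtain ⟨hψ0, hψπ⟩ := hψ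
  obtain ⟨hθ0, hθπ⟩ := hθ
  have hpi := Real.pi_pos
  have key : ∀ x : ℝ, (d*Real.cos x*Real.cos x - d) * Real.cos ψ
      + (d*Real.cos x*Real.sin x) * Real.sin ψ = d * Real.sin x * Real.sin (ψ - x) := by
    intro x
    rw [Real.sin_sub]
    linear_combination (d * Real.cos ψ) * (Real.sin_sq_add_cos_sq x)
  rw [key] at hadv
  have hsθ : 0 < Real.sin θ := Real.sin_pos_of_pos_of_lt_pi hθ0 (by linarith)
  have hψθ : θ ≤ ψ := by
    by_contra h
    push_neg at h
    have : Real.sin (ψ - θ) < 0 :=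
      Real.sin_neg_of_neg_of_neg_pi_lt (by linarith) (by linarith)
    nlinarith [mul_pos hd hsθ]
  intro φ ⟨hφ0, hφθ⟩
  rw [key]
  have h1 : 0 ≤ Real.sin φ := Real.sin_nonneg_of_nonneg_of_le_pi hφ0 (by linarith)
  have h2 : 0 ≤ Real.sin (ψ - φ) :=
    Real.sin_nonneg_of_nonneg_of_le_pi (by linarith) (by linarith)
  positivity
end
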